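/- Let ψ ∈ ℂ⁸ be the three-qubit state with computational-basis coordinates (ordered |000⟩,|001⟩,|010⟩,|011⟩,|100⟩,|101⟩,|110⟩,|111⟩) equal to (1/2)·(1, (1−i)/2, (1−i)/2, (1+i)/2, (1−i)/2, (1+i)/2, (1+i)/2, 0). Then every single-qubit reduced density matrix of ψ equals (1/2)(I + (1/4)(X+Y+Z)); in particular, each single-qubit Bloch vector equals (1/4, 1/4, 1/4), which is (√3/4)·m₁ and has Euclidean norm √3/4. -/

import Mathlib

open Matrix Complex

noncomputable section

def X2 : Matrix (Fin 2) (Fin 2) ℂ := !![0, 1; 1, 0]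
def Y2 : Matrix (Fin 2) (Fin 2) ℂ := !![0, -Complex.I; Complex.I, 0]
def Z2 : Matrix (Fin 2) (Fin 2) ℂ := !![1, 0; 0, -1]

/-- Three-qubit states, indexed by bit strings (`f 0` is the most significant bit). -/
abbrev V3 := (Fin 3 → Fin 2) → ℂ

/-- Binary index `|z₁z₂z₃⟩ ↦ 4z₁ + 2z₂ + z₃`. -/
def idx3 (f : Fin 3 → Fin 2) : Fin 8 :=
  ⟨4 * (f 0).val + 2 * (f 1).val + (f 2).val, by
    have := (f 0).isLt; have := (f 1).isLt; have := (f 2).isLt; omega⟩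

/-- The three-qubit state `(1/2)(1, (1−i)/2, (1−i)/2, (1+i)/2, (1−i)/2, (1+i)/2, (1+i)/2, 0)`. -/
def ψ311 : V3 := fun f => (1 / 2 : ℂ) *
  (![1, (1 - Complex.I) / 2, (1 - Complex.I) / 2, (1 + Complex.I) / 2,
     (1 - Complex.I) / 2, (1 + Complex.I) / 2, (1 + Complex.I) / 2, 0] : Fin 8 → ℂ) (idx3 f)

/-- Reduced density matrix of qubit `j` (partial trace over the other two qubits). -/
def rdm3 (ψ : V3) (j : Fin 3) : Matrix (Fin 2) (Fin 2) ℂ :=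
  fun a b => ∑ f : Fin 3 → Fin 2,
    if f j = a then ψ f * star (ψ (Function.update f j b)) else 0


lemma expand_pi_sum (g : (Fin 3 → Fin 2) → ℂ) :
    ∑ f : Fin 3 → Fin 2, g f = ∑ p : Fin 2 × Fin 2 × Fin 2, g ![p.1, p.2.1, p.2.2] :=
  (Fintype.sum_bijective (fun p : Fin 2 × Fin 2 × Fin 2 => ![p.1, p.2.1, p.2.2])
    (by decide) _ g (fun _ => rfl)).symm

lemma two_fin2 : (2 : Fin 2) = 0 := rfl

lemma rdm_entry (j : Fin 3) (a b : Fin 2) :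
    rdm3 ψ311 j a b = ∑ p : Fin 2 × Fin 2 × Fin 2,
      if (![p.1, p.2.1, p.2.2] : Fin 3 → Fin 2) j = a then
        ψ311 ![p.1, p.2.1, p.2.2] *
          star (ψ311 (Function.update (![p.1, p.2.1, p.2.2] : Fin 3 → Fin 2) j b)) else 0 := by
  exact expand_pi_sum _

set_option maxHeartbeats 2000000 in
lemma rdm_eq (j : Fin 3) : rdm3 ψ311 j =
    (1 / 2 : ℂ) • ((1 : Matrix (Fin 2) (Fin 2) ℂ) + (1 / 4 : ℂ) • (X2 + Y2 + Z2)) := by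
  fin_cases j <;>
  · ext a b
    rw [rdm_entry]
    simp only [Fintype.sum_prod_type, Fin.sum_univ_two]
    fin_cases a <;> fin_cases b <;>
    · norm_num [ψ311, idx3, Function.update, Complex.ext_iff, X2, Y2, Z2,
        Matrix.smul_apply, Matrix.add_apply, Matrix.one_apply, two_fin2,
        Matrix.cons_val_succ, Fin.ext_iff, Matrix.cons_val_two, Matrix.vecHead, Matrix.vecTail]

/-- Every single-qubit reduced density matrix of `ψ311` equals
`½(I + ¼(X+Y+Z))`; in particular each single-qubit Bloch vector is `(1/4, 1/4, 1/4)`,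
which is `(√3/4)·m₁` and has Euclidean norm `√3/4`. -/
theorem three_qubit_EJM_fiducial_marginals :
    (∀ j : Fin 3, rdm3 ψ311 j =
      (1 / 2 : ℂ) • ((1 : Matrix (Fin 2) (Fin 2) ℂ) + (1 / 4 : ℂ) • (X2 + Y2 + Z2))) ∧
    (∀ j : Fin 3,
      ((rdm3 ψ311 j * X2).trace, (rdm3 ψ311 j * Y2).trace, (rdm3 ψ311 j * Z2).trace) =
        ((1 / 4 : ℂ), (1 / 4 : ℂ), (1 / 4 : ℂ))) ∧
    (![(1 / 4 : ℝ), 1 / 4, 1 / 4] =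
      (Real.sqrt 3 / 4) • fun _ : Fin 3 => 1 / Real.sqrt 3) ∧
    Real.sqrt ((1 / 4) ^ 2 + (1 / 4) ^ 2 + (1 / 4) ^ 2) = Real.sqrt 3 / 4 := by
  refine ⟨rdm_eq, ?_, ?_, ?_⟩
  · intro j
    rw [rdm_eq j]
    norm_num [Matrix.trace, Matrix.mul_apply, Fin.sum_univ_two, X2, Y2, Z2,
      Matrix.smul_apply, Matrix.add_apply, Matrix.one_apply, Complex.ext_iff]
  · funext i
    have h3 : Real.sqrt 3 ≠ 0 := by positivity
    have hsq : Real.sqrt 3 * Real.sqrt 3 = 3 := Real.mul_self_sqrt (by norm_num)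
    fin_cases i <;>
    · simp only [Matrix.cons_val_zero, Matrix.cons_val_one, Matrix.head_cons,
        Pi.smul_apply, smul_eq_mul, Matrix.cons_val_succ, Matrix.cons_val]
      field_simp
      simp [Matrix.cons_val]
  · have hsq : Real.sqrt 3 ^ 2 = 3 := Real.sq_sqrt (by norm_num)
    have : ((1:ℝ) / 4) ^ 2 + (1 / 4) ^ 2 + (1 / 4) ^ 2 = (Real.sqrt 3 / 4) ^ 2 := by
      nlinarith [hsq]
    rw [this, Real.sqrt_sq (by positivity)]


end
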